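/- Let P be a periodic pattern over {0,…,σ−1} with type(P) = −1, and let s = L-head(P) and H = L-root(P). Define δ(P,T) = |{j ∈ [1..n] : the longest common prefix of T[j..n] and P has length ≥ 3τ−1 and T[j..n] ≺ P}|, δᵃ(P,T) = |{j ∈ R⁻_{s,H} : L-exp(j) ≤ L-exp(P)}|, and δˢ(P,T) = |{j ∈ R⁻_{s,H} : L-exp(j) = L-exp(P) and T[j..n] ⪰ P}|. Then δ(P,T) = δᵃ(P,T) − δˢ(P,T). -/

import Mathlib

open scoped Classical

namespace CSA

/-- Character of a 1-indexed string at position `i` (junk value 0 out of range). -/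
def idx (S : List ℕ) (i : ℕ) : ℕ := S.getD (i - 1) 0

/-- Substring `S[i..j)` in the 1-indexed, half-open convention. -/
def sub (S : List ℕ) (i j : ℕ) : List ℕ := (S.drop (i - 1)).take (j - i)

/-- Suffix `S[i..|S|]` (1-indexed). -/
def suf (S : List ℕ) (i : ℕ) : List ℕ := S.drop (i - 1)

/-- Length of the longest common prefix of two strings. -/
def lcp (A B : List ℕ) : ℕ := ((A.zip B).takeWhile fun p => p.1 == p.2).length

/-- `LCE T j₁ j₂` is the length of the longest common prefix of `T[j₁..n]` and `T[j₂..n]`. -/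
def LCE (T : List ℕ) (j₁ j₂ : ℕ) : ℕ := lcp (suf T j₁) (suf T j₂)

/-- `p` is a period of `S`. -/
def IsPeriod (S : List ℕ) (p : ℕ) : Prop :=
  1 ≤ p ∧ p ≤ S.length ∧ ∀ i, i + p < S.length → S.getD i 0 = S.getD (i + p) 0

/-- The shortest period of `S`. -/
noncomputable def per (S : List ℕ) : ℕ := sInf {p | IsPeriod S p}

/-- `R = {i ∈ [1..n−3τ+2] : per(T[i..i+3τ−1)) ≤ τ/3}`. -/
noncomputable def R (T : List ℕ) (τ : ℕ) : Set ℕ :=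
  {i | 1 ≤ i ∧ i + 3 * τ ≤ T.length + 2 ∧ 3 * per (sub T i (i + 3 * τ - 1)) ≤ τ}

/-- `rend(j) = min{j′ ≥ j : j′ ∉ R} + 3τ − 2`. -/
noncomputable def rend (T : List ℕ) (τ j : ℕ) : ℕ :=
  sInf {j' | j ≤ j' ∧ j' ∉ R T τ} + 3 * τ - 2

/-- `L-root(j)`: lexicographically smallest among `{T[j+t..j+t+p) : 0 ≤ t < p}`
where `p = per(T[j..j+3τ−1))`. -/
noncomputable def Lroot (T : List ℕ) (τ j : ℕ) : List ℕ :=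
  (((Finset.range (per (sub T j (j + 3 * τ - 1)))).image fun t =>
      sub T (j + t) (j + t + per (sub T j (j + 3 * τ - 1)))).min).untopD []

/-- `L-head(j)`: the (unique) `s ∈ [0..p)` with `T[j+s..j+s+p) = L-root(j)`. -/
noncomputable def Lhead (T : List ℕ) (τ j : ℕ) : ℕ :=
  sInf {s | s < per (sub T j (j + 3 * τ - 1)) ∧
    sub T (j + s) (j + s + per (sub T j (j + 3 * τ - 1))) = Lroot T τ j}

noncomputable def Lexp (T : List ℕ) (τ j : ℕ) : ℕ :=
  (rend T τ j - j - Lhead T τ j) / per (sub T j (j + 3 * τ - 1))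

noncomputable def Ltail (T : List ℕ) (τ j : ℕ) : ℕ :=
  (rend T τ j - j - Lhead T τ j) % per (sub T j (j + 3 * τ - 1))

noncomputable def rendfull (T : List ℕ) (τ j : ℕ) : ℕ := rend T τ j - Ltail T τ j

/-- `type(j) = +1` if `rend(j) ≤ n` and `T[rend(j)] > T[rend(j)−p]`, and `−1` otherwise. -/
noncomputable def typ (T : List ℕ) (τ j : ℕ) : ℤ :=
  if rend T τ j ≤ T.length ∧
      idx T (rend T τ j - per (sub T j (j + 3 * τ - 1))) < idx T (rend T τ j)
    then 1 else -1

noncomputable def Rminus (T : List ℕ) (τ : ℕ) : Set ℕ := {j ∈ R T τ | typ T τ j = -1}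

noncomputable def RH (T : List ℕ) (τ : ℕ) (H : List ℕ) : Set ℕ :=
  {j ∈ R T τ | Lroot T τ j = H}

noncomputable def RsH (T : List ℕ) (τ s : ℕ) (H : List ℕ) : Set ℕ :=
  {j ∈ R T τ | Lroot T τ j = H ∧ Lhead T τ j = s}

noncomputable def RminusH (T : List ℕ) (τ : ℕ) (H : List ℕ) : Set ℕ :=
  Rminus T τ ∩ RH T τ H

noncomputable def RminusSH (T : List ℕ) (τ s : ℕ) (H : List ℕ) : Set ℕ :=
  Rminus T τ ∩ RsH T τ s H

noncomputable def Rprime (T : List ℕ) (τ : ℕ) : Set ℕ := {j ∈ R T τ | j - 1 ∉ R T τ}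

/-- `Occ(P,S)`: the set of (1-indexed) starting positions of occurrences of `P` in `S`. -/
def OccSet (P S : List ℕ) : Set ℕ :=
  {j | 1 ≤ j ∧ j + P.length ≤ S.length + 1 ∧ sub S j (j + P.length) = P}

noncomputable def RangeBeg (P T : List ℕ) : ℕ :=
  Set.ncard {i | 1 ≤ i ∧ i ≤ T.length ∧ suf T i < P}

noncomputable def RangeEnd (P T : List ℕ) : ℕ := RangeBeg P T + (OccSet P T).ncard

/-- `ISA[j]`: the lexicographic rank of the suffix `T[j..n]` among all suffixes of `T`. -/
noncomputable def ISA (T : List ℕ) (j : ℕ) : ℕ :=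
  Set.ncard {j' | 1 ≤ j' ∧ j' ≤ T.length ∧ suf T j' ≤ suf T j}

/-- `succ_S(i) = min{j ∈ S ∪ {n−2τ+2} : j ≥ i}`. -/
noncomputable def succS (T : List ℕ) (τ : ℕ) (Sync : Set ℕ) (i : ℕ) : ℕ :=
  sInf {j | i ≤ j ∧ (j ∈ Sync ∨ j = T.length + 2 - 2 * τ)}

/-- The set `D` of distinguishing prefixes. -/
noncomputable def Dset (T : List ℕ) (τ : ℕ) (Sync : Set ℕ) : Set (List ℕ) :=
  {X | ∃ i, 1 ≤ i ∧ i + 3 * τ ≤ T.length + 2 ∧ i ∉ R T τ ∧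
    X = sub T i (succS T τ Sync i + 2 * τ)}

/-- `T^∞[i] = T[1 + ((i−1) mod n)]` for `i : ℤ`. -/
def tinf (T : List ℕ) (i : ℤ) : ℕ := idx T (((i - 1).emod (T.length : ℤ)).toNat + 1)

/-- `W[i]`: the reverse of `T^∞[s^lex_i − τ .. s^lex_i + 2τ)`. -/
def Wstr (T : List ℕ) (τ : ℕ) (slex : ℕ → ℕ) (i : ℕ) : List ℕ :=
  ((List.range (3 * τ)).map fun k => tinf T ((slex i : ℤ) - (τ : ℤ) + (k : ℤ))).reverse

/- Pattern versions of the `L`-decomposition functions. -/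

noncomputable def perP (τ : ℕ) (P : List ℕ) : ℕ := per (P.take (3 * τ - 1))

/-- A pattern is periodic if `|P| ≥ 3τ−1` and `per(P[1..3τ−1]) ≤ τ/3`. -/
noncomputable def Periodic (τ : ℕ) (P : List ℕ) : Prop :=
  3 * τ - 1 ≤ P.length ∧ 3 * perP τ P ≤ τ

noncomputable def pend (τ : ℕ) (P : List ℕ) : ℕ :=
  1 + perP τ P + lcp P (P.drop (perP τ P))

noncomputable def LrootP (τ : ℕ) (P : List ℕ) : List ℕ :=
  (((Finset.range (perP τ P)).image fun t => (P.drop t).take (perP τ P)).min).untopD []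

noncomputable def LheadP (τ : ℕ) (P : List ℕ) : ℕ :=
  sInf {s | s < perP τ P ∧ (P.drop s).take (perP τ P) = LrootP τ P}

noncomputable def LexpP (τ : ℕ) (P : List ℕ) : ℕ :=
  (pend τ P - 1 - LheadP τ P) / perP τ P

noncomputable def LtailP (τ : ℕ) (P : List ℕ) : ℕ :=
  (pend τ P - 1 - LheadP τ P) % perP τ P

noncomputable def pendfullP (τ : ℕ) (P : List ℕ) : ℕ := pend τ P - LtailP τ P

noncomputable def typP (τ : ℕ) (P : List ℕ) : ℤ :=
  if pend τ P ≤ P.length ∧ idx P (pend τ P - perP τ P) < idx P (pend τ P)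
    then 1 else -1

/-- `pow(H)`: the prefix of length `|H|·⌈τ/|H|⌉` of `H^∞`. -/
def powS (τ : ℕ) (H : List ℕ) : List ℕ :=
  (List.replicate ((τ + H.length - 1) / H.length) H).flatten


-- ===== helper lemmas =====

lemma lcp_nil_left (B : List ℕ) : lcp [] B = 0 := by simp [lcp]
lemma lcp_nil_right (A : List ℕ) : lcp A [] = 0 := by simp [lcp]
lemma lcp_cons (a b : ℕ) (A B : List ℕ) :
    lcp (a :: A) (b :: B) = if a = b then lcp A B + 1 else 0 := by
  simp only [lcp, List.zip_cons_cons, List.takeWhile_cons]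
  by_cases h : a = b <;> simp [h]

lemma lcp_le_left : ∀ A B : List ℕ, lcp A B ≤ A.length
  | [], B => by simp [lcp_nil_left]
  | a :: A, [] => by simp [lcp_nil_right]
  | a :: A, b :: B => by
    rw [lcp_cons]; by_cases h : a = b <;> simp [h]
    exact lcp_le_left A B

lemma lcp_le_right : ∀ A B : List ℕ, lcp A B ≤ B.length
  | [], B => by simp [lcp_nil_left]
  | a :: A, [] => by simp [lcp_nil_right]
  | a :: A, b :: B => by
    rw [lcp_cons]; by_cases h : a = b <;> simp [h]
    exact lcp_le_right A B

lemma lcp_getD : ∀ (A B : List ℕ) (i : ℕ), i < lcp A B → A.getD i 0 = B.getD i 0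
  | [], B, i, h => by simp [lcp_nil_left] at h
  | a :: A, [], i, h => by simp [lcp_nil_right] at h
  | a :: A, b :: B, i, h => by
    rw [lcp_cons] at h
    by_cases hab : a = b
    · simp only [hab, if_true] at h
      cases i with
      | zero => simp [hab]
      | succ i => simpa using lcp_getD A B i (by omega)
    · simp [hab] at h

lemma le_lcp : ∀ (A B : List ℕ) (k : ℕ), k ≤ A.length → k ≤ B.length →
    (∀ i < k, A.getD i 0 = B.getD i 0) → k ≤ lcp A B
  | A, B, 0, _, _, _ => Nat.zero_le _
  | [], B, k + 1, hA, _, _ => by simp at hA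
  | a :: A, [], k + 1, _, hB, _ => by simp at hB
  | a :: A, b :: B, k + 1, hA, hB, h => by
    have hab : a = b := by simpa using h 0 (Nat.succ_pos _)
    rw [lcp_cons, if_pos hab]
    have := le_lcp A B k (by simpa using hA) (by simpa using hB)
      (fun i hi => by simpa using h (i + 1) (by omega))
    omega

lemma lcp_ne : ∀ (A B : List ℕ), lcp A B < A.length → lcp A B < B.length →
    A.getD (lcp A B) 0 ≠ B.getD (lcp A B) 0
  | [], B, h, _ => by simp at h
  | a :: A, [], _, h => by simp at h
  | a :: A, b :: B, h1, h2 => by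
    by_cases hab : a = b
    · simp only [lcp_cons, if_pos hab, List.length_cons] at h1 h2 ⊢
      simpa using lcp_ne A B (by omega) (by omega)
    · rw [lcp_cons, if_neg hab] at h1 h2 ⊢
      simpa using hab

/-- first-difference lemma for lex `<`. -/
lemma lex_of_getD_lt : ∀ (A B : List ℕ) (k : ℕ), (∀ i < k, A.getD i 0 = B.getD i 0) →
    k < A.length → k < B.length → A.getD k 0 < B.getD k 0 → A < B
  | a :: A, b :: B, 0, _, _, _, hlt => List.Lex.rel (by simpa using hlt)
  | a :: A, b :: B, k + 1, h, hA, hB, hlt => by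
    have hab : a = b := by simpa using h 0 (Nat.succ_pos _)
    subst hab
    exact List.Lex.cons (lex_of_getD_lt A B k
      (fun i hi => by simpa using h (i + 1) (by omega))
      (by simpa using hA) (by simpa using hB) (by simpa using hlt))
  | [], B, k, _, hA, _, _ => absurd hA (by simp)
  | a :: A, [], k, _, _, hB, _ => absurd hB (by simp)

/-- strict-prefix lemma for lex `<`. -/
lemma lex_of_prefix : ∀ (A B : List ℕ), (∀ i < A.length, A.getD i 0 = B.getD i 0) →
    A.length < B.length → A < B
  | [], b :: B, _, _ => List.Lex.nil
  | a :: A, b :: B, h, hlen => by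
    have hab : a = b := by simpa using h 0 (Nat.succ_pos _)
    subst hab
    exact List.Lex.cons (lex_of_prefix A B
      (fun i hi => by simpa using h (i + 1) (by simp only [List.length_cons]; omega))
      (by simpa using hlen))
  | A, [], _, hlen => absurd hlen (by simp)

lemma list_eq_of_getD (A B : List ℕ) (hlen : A.length = B.length)
    (h : ∀ i < A.length, A.getD i 0 = B.getD i 0) : A = B := by
  apply List.ext_getElem hlen
  intro i h1 h2
  have := h i h1
  rwa [List.getD_eq_getElem _ _ h1, List.getD_eq_getElem _ _ h2] at this


lemma getD_drop (l : List ℕ) (a i : ℕ) : (l.drop a).getD i 0 = l.getD (a + i) 0 := by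
  simp [List.getD_eq_getElem?_getD, List.getElem?_drop]

lemma getD_take (l : List ℕ) (b i : ℕ) (h : i < b) : (l.take b).getD i 0 = l.getD i 0 := by
  simp [List.getD_eq_getElem?_getD, List.getElem?_take, h]

lemma sub_length (S : List ℕ) (a b : ℕ) :
    (sub S a b).length = min (b - a) (S.length - (a - 1)) := by
  simp [sub]

lemma sub_getD (S : List ℕ) (a b i : ℕ) (h : i < b - a) :
    (sub S a b).getD i 0 = S.getD (a - 1 + i) 0 := by
  rw [sub, getD_take _ _ _ h, getD_drop]

lemma suf_length (S : List ℕ) (a : ℕ) : (suf S a).length = S.length - (a - 1) := by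
  simp [suf]

lemma suf_getD (S : List ℕ) (a i : ℕ) : (suf S a).getD i 0 = S.getD (a - 1 + i) 0 := by
  rw [suf, getD_drop]

lemma isPeriod_length (S : List ℕ) (h : S ≠ []) : IsPeriod S S.length :=
  ⟨List.length_pos_iff.2 h, le_rfl, fun i hi => by omega⟩

lemma per_isPeriod (S : List ℕ) (h : S ≠ []) : IsPeriod S (per S) :=
  Nat.sInf_mem (⟨S.length, by exact isPeriod_length S h⟩ : {p | IsPeriod S p}.Nonempty)

lemma per_le (S : List ℕ) (p : ℕ) (h : IsPeriod S p) : per S ≤ p := Nat.sInf_le (by exact h)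

lemma per_pos (S : List ℕ) (h : S ≠ []) : 1 ≤ per S := (per_isPeriod S h).1

/-- Reconstruction: a `p`-periodic string whose window at `s` is `H` follows the
`H`-pattern everywhere. -/
lemma pattern_of_period (S H : List ℕ) (p s : ℕ) (hp : 0 < p) (hs : s < p)
    (hsp : s + p ≤ S.length)
    (hper : ∀ i, i + p < S.length → S.getD i 0 = S.getD (i + p) 0)
    (hH : ∀ k, k < p → S.getD (s + k) 0 = H.getD k 0) :
    ∀ i, i < S.length → S.getD i 0 = H.getD ((i + p - s) % p) 0 := by
  have base : ∀ i, s ≤ i → i < s + p → S.getD i 0 = H.getD ((i + p - s) % p) 0 := by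
    intro i h1 h2
    have h3 : (i + p - s) % p = i - s := by
      have e : i + p - s = (i - s) + p := by omega
      rw [e, Nat.add_mod_right, Nat.mod_eq_of_lt (by omega)]
    rw [h3]
    have := hH (i - s) (by omega)
    rwa [show s + (i - s) = i by omega] at this
  intro i
  induction i using Nat.strong_induction_on with
  | _ i ih =>
    intro hi
    rcases lt_trichotomy i s with h | h | h
    · have e1 : S.getD i 0 = S.getD (i + p) 0 := hper i (by omega)
      have e2 := base (i + p) (by omega) (by omega)
      rw [e1, e2]
      congr 1
      rw [show i + p + p - s = (i + p - s) + p by omega, Nat.add_mod_right]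
    · exact base i (by omega) (by omega)
    · by_cases h2 : i < s + p
      · exact base i (by omega) h2
      · have e1 : S.getD (i - p) 0 = S.getD i 0 := by
          have := hper (i - p) (by omega)
          rwa [show i - p + p = i by omega] at this
        have e2 := ih (i - p) (by omega) (by omega)
        rw [← e1, e2]
        congr 1
        rw [show i + p - s = (i - p + p - s) + p by omega, Nat.add_mod_right]

lemma untop'_min (s : Finset (List ℕ)) (H : s.Nonempty) : s.min.untopD [] = s.min' H := by
  rw [← Finset.coe_min' H]; rfl


lemma R_elim {T : List ℕ} {τ i : ℕ} (h : i ∈ R T τ) :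
    1 ≤ i ∧ i + 3 * τ ≤ T.length + 2 ∧ 3 * per (sub T i (i + 3 * τ - 1)) ≤ τ := h

lemma window_length {T : List ℕ} {τ i : ℕ} (hτ : 1 ≤ τ) (h : i ∈ R T τ) :
    (sub T i (i + 3 * τ - 1)).length = 3 * τ - 1 := by
  obtain ⟨h1, h2, h3⟩ := R_elim h
  rw [sub_length]; omega

lemma window_ne_nil {T : List ℕ} {τ i : ℕ} (hτ : 1 ≤ τ) (h : i ∈ R T τ) :
    sub T i (i + 3 * τ - 1) ≠ [] := by
  have := window_length hτ h
  intro hn; rw [hn] at this; simp at this; omega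

lemma window_per_pos {T : List ℕ} {τ i : ℕ} (hτ : 1 ≤ τ) (h : i ∈ R T τ) :
    1 ≤ per (sub T i (i + 3 * τ - 1)) :=
  (per_isPeriod _ (window_ne_nil hτ h)).1

/-- absolute-position form of the periodicity of the window at `i ∈ R`. -/
lemma window_per_abs {T : List ℕ} {τ i : ℕ} (hτ : 1 ≤ τ) (h : i ∈ R T τ) :
    ∀ y, i + per (sub T i (i + 3 * τ - 1)) ≤ y → y < i + 3 * τ - 1 →
      T.getD (y - 1) 0 = T.getD (y - 1 - per (sub T i (i + 3 * τ - 1))) 0 := by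
  intro y hy1 hy2
  set q := per (sub T i (i + 3 * τ - 1)) with hq
  have hq1 : 1 ≤ q := window_per_pos hτ h
  obtain ⟨hi1, hi2, hi3⟩ := R_elim h
  have hper := (per_isPeriod _ (window_ne_nil hτ h)).2.2
  rw [window_length hτ h] at hper
  have key := hper (y - i - q) (by omega)
  rw [sub_getD _ _ _ _ (by omega), sub_getD _ _ _ _ (by omega)] at key
  rw [show i - 1 + (y - i - q) = y - 1 - q by omega,
      show i - 1 + (y - i - q + q) = y - 1 by omega] at key
  exact key.symm

section Run
variable {T : List ℕ} {τ n j : ℕ}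

lemma jstar_spec (hτ : 1 ≤ τ) (hj : j ∈ R T τ) :
    (j ≤ sInf {j' | j ≤ j' ∧ j' ∉ R T τ} ∧ sInf {j' | j ≤ j' ∧ j' ∉ R T τ} ∉ R T τ) := by
  have hne : {j' | j ≤ j' ∧ j' ∉ R T τ}.Nonempty := by
    refine ⟨T.length + 2, ?_, fun hmem => ?_⟩
    · obtain ⟨h1, h2, h3⟩ := R_elim hj; omega
    · obtain ⟨h1, h2, h3⟩ := R_elim hmem; omega
  exact Nat.sInf_mem hne

lemma jstar_gt (hτ : 1 ≤ τ) (hj : j ∈ R T τ) : j < sInf {j' | j ≤ j' ∧ j' ∉ R T τ} := by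
  obtain ⟨h1, h2⟩ := jstar_spec hτ hj
  rcases Nat.lt_or_ge j (sInf {j' | j ≤ j' ∧ j' ∉ R T τ}) with h | h
  · exact h
  · exact absurd hj (by rwa [show sInf {j' | j ≤ j' ∧ j' ∉ R T τ} = j by omega] at h2)

lemma jstar_lb (hτ : 1 ≤ τ) (hj : j ∈ R T τ) :
    ∀ y, j ≤ y → y < sInf {j' | j ≤ j' ∧ j' ∉ R T τ} → y ∈ R T τ := by
  intro y h1 h2
  by_contra hy
  have := Nat.sInf_le (show y ∈ {j' | j ≤ j' ∧ j' ∉ R T τ} from ⟨h1, hy⟩)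
  omega

lemma jstar_ub (hτ : 1 ≤ τ) (hj : j ∈ R T τ) :
    sInf {j' | j ≤ j' ∧ j' ∉ R T τ} ≤ T.length + 3 - 3 * τ := by
  obtain ⟨h1, h2, h3⟩ := R_elim hj
  refine Nat.sInf_le ⟨by omega, fun hmem => ?_⟩
  obtain ⟨g1, g2, g3⟩ := R_elim hmem
  omega

lemma rend_bounds (hτ : 1 ≤ τ) (hj : j ∈ R T τ) :
    j + 3 * τ - 1 ≤ rend T τ j ∧ rend T τ j ≤ T.length + 1 := by
  have h1 := jstar_gt hτ hj
  have h2 := jstar_ub hτ hj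
  obtain ⟨g1, g2, g3⟩ := R_elim hj
  have hre : rend T τ j = sInf {j' | j ≤ j' ∧ j' ∉ R T τ} + 3 * τ - 2 := rfl
  omega

/-- periodicity of `T[j..rend)` for `j ∈ R`. -/
lemma run_per (hτ : 1 ≤ τ) (hj : j ∈ R T τ) :
    ∀ x, j + per (sub T j (j + 3 * τ - 1)) ≤ x → x < rend T τ j →
      T.getD (x - 1) 0 = T.getD (x - 1 - per (sub T j (j + 3 * τ - 1))) 0 := by
  set p := per (sub T j (j + 3 * τ - 1)) with hp
  set js := sInf {j' | j ≤ j' ∧ j' ∉ R T τ} with hjs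
  have hjgt := jstar_gt hτ hj
  have hp1 : 1 ≤ p := window_per_pos hτ hj
  obtain ⟨hj1, hj2, hj3⟩ := R_elim hj
  have key : ∀ d, j + d ≤ js - 1 → ∀ x, j + p ≤ x → x < j + d + 3 * τ - 1 →
      T.getD (x - 1) 0 = T.getD (x - 1 - p) 0 := by
    intro d
    induction d with
    | zero =>
      intro _ x hx1 hx2
      exact window_per_abs hτ hj x hx1 (by omega)
    | succ d ih =>
      intro hd x hx1 hx2
      rcases Nat.lt_or_ge x (j + d + 3 * τ - 1) with h | h
      · exact ih (by omega) x hx1 h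
      · have hxe : x = j + d + 3 * τ - 1 := by omega
        have hj' : j + d + 1 ∈ R T τ := jstar_lb hτ hj _ (by omega) (by omega)
        set q := per (sub T (j + d + 1) (j + d + 1 + 3 * τ - 1)) with hqd
        have hq1 : 1 ≤ q := window_per_pos hτ hj'
        obtain ⟨g1, g2, g3⟩ := R_elim hj'
        have s1 : T.getD (x - 1) 0 = T.getD (x - 1 - q) 0 :=
          window_per_abs hτ hj' x (by omega) (by omega)
        have s2 : T.getD ((x - q) - 1) 0 = T.getD ((x - q) - 1 - p) 0 :=
          ih (by omega) (x - q) (by omega) (by omega)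
        have s3 : T.getD ((x - p) - 1) 0 = T.getD ((x - p) - 1 - q) 0 :=
          window_per_abs hτ hj' (x - p) (by omega) (by omega)
        rw [show x - q - 1 - p = x - 1 - p - q by omega,
            show x - q - 1 = x - 1 - q by omega] at s2
        rw [show x - p - 1 - q = x - 1 - p - q by omega,
            show x - p - 1 = x - 1 - p by omega] at s3
        rw [s1, s2]
        exact s3.symm
  intro x hx1 hx2
  exact key (js - 1 - j) (by omega) x hx1 (by unfold rend at hx2; omega)

/-- the period breaks at `rend` (if `rend ≤ n`). -/
lemma run_break (hτ : 1 ≤ τ) (hj : j ∈ R T τ) (hr : rend T τ j ≤ T.length) :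
    T.getD (rend T τ j - 1) 0 ≠ T.getD (rend T τ j - 1 - per (sub T j (j + 3 * τ - 1))) 0 := by
  set p := per (sub T j (j + 3 * τ - 1)) with hp
  set js := sInf {j' | j ≤ j' ∧ j' ∉ R T τ} with hjs
  have hjgt := jstar_gt hτ hj
  have hp1 : 1 ≤ p := window_per_pos hτ hj
  obtain ⟨hj1, hj2, hj3⟩ := R_elim hj
  have hjsnot : js ∉ R T τ := (jstar_spec hτ hj).2
  have hrend : rend T τ j = js + 3 * τ - 2 := by unfold rend; rfl
  intro hcontra
  apply hjsnot
  refine ⟨by omega, by omega, ?_⟩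
  have hlenW : (sub T js (js + 3 * τ - 1)).length = 3 * τ - 1 := by
    rw [sub_length]; omega
  have hPer : IsPeriod (sub T js (js + 3 * τ - 1)) p := by
    refine ⟨hp1, by omega, ?_⟩
    intro i hip
    rw [hlenW] at hip
    rw [sub_getD _ _ _ _ (by omega), sub_getD _ _ _ _ (by omega)]
    set x := js + i + p with hx
    have e1 : js - 1 + i = x - 1 - p := by omega
    have e2 : js - 1 + (i + p) = x - 1 := by omega
    rw [e1, e2]
    rcases Nat.lt_or_ge x (rend T τ j) with h | h
    · exact (run_per hτ hj x (by omega) h).symm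
    · have : x = rend T τ j := by omega
      rw [this]; exact hcontra.symm
  have := per_le _ _ hPer
  omega

end Run

section Roots
variable {T : List ℕ} {τ j : ℕ} {P : List ℕ}

lemma rot_length (hτ : 1 ≤ τ) (hj : j ∈ R T τ) {t : ℕ}
    (ht : t < per (sub T j (j + 3 * τ - 1))) :
    (sub T (j + t) (j + t + per (sub T j (j + 3 * τ - 1)))).length =
      per (sub T j (j + 3 * τ - 1)) := by
  obtain ⟨h1, h2, h3⟩ := R_elim hj
  rw [sub_length]; omega

lemma Lroot_mem (hτ : 1 ≤ τ) (hj : j ∈ R T τ) :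
    ∃ t, t < per (sub T j (j + 3 * τ - 1)) ∧
      sub T (j + t) (j + t + per (sub T j (j + 3 * τ - 1))) = Lroot T τ j := by
  set p := per (sub T j (j + 3 * τ - 1)) with hp
  have hp1 : 1 ≤ p := window_per_pos hτ hj
  have hne : ((Finset.range p).image fun t => sub T (j + t) (j + t + p)).Nonempty :=
    Finset.Nonempty.image (Finset.nonempty_range_iff.2 (by omega)) _
  rw [Lroot, untop'_min _ hne]
  have := Finset.min'_mem _ hne
  rw [Finset.mem_image] at this
  obtain ⟨t, ht, e⟩ := this
  exact ⟨t, Finset.mem_range.mp ht, e⟩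

lemma Lroot_length (hτ : 1 ≤ τ) (hj : j ∈ R T τ) :
    (Lroot T τ j).length = per (sub T j (j + 3 * τ - 1)) := by
  obtain ⟨t, ht, e⟩ := Lroot_mem hτ hj
  rw [← e, rot_length hτ hj ht]

lemma Lhead_spec (hτ : 1 ≤ τ) (hj : j ∈ R T τ) :
    Lhead T τ j < per (sub T j (j + 3 * τ - 1)) ∧
      sub T (j + Lhead T τ j) (j + Lhead T τ j + per (sub T j (j + 3 * τ - 1))) =
        Lroot T τ j := by
  obtain ⟨t, ht, e⟩ := Lroot_mem hτ hj
  have : Lhead T τ j ∈ {s | s < per (sub T j (j + 3 * τ - 1)) ∧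
      sub T (j + s) (j + s + per (sub T j (j + 3 * τ - 1))) = Lroot T τ j} :=
    Nat.sInf_mem ⟨t, ht, e⟩
  exact this

-- P-side
lemma Ptake_length (hτ : 1 ≤ τ) (hP : Periodic τ P) :
    (P.take (3 * τ - 1)).length = 3 * τ - 1 := by
  obtain ⟨h1, h2⟩ := hP
  simp; omega

lemma perP_pos (hτ : 1 ≤ τ) (hP : Periodic τ P) : 1 ≤ perP τ P := by
  refine (per_isPeriod _ ?_).1
  have := Ptake_length hτ hP
  intro hn; rw [hn] at this; simp at this; omega

lemma protP_length (hτ : 1 ≤ τ) (hP : Periodic τ P) {t : ℕ} (ht : t < perP τ P) :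
    ((P.drop t).take (perP τ P)).length = perP τ P := by
  obtain ⟨h1, h2⟩ := hP
  simp only [List.length_take, List.length_drop]
  omega

lemma LrootP_mem (hτ : 1 ≤ τ) (hP : Periodic τ P) :
    ∃ t, t < perP τ P ∧ (P.drop t).take (perP τ P) = LrootP τ P := by
  set p := perP τ P with hp
  have hp1 : 1 ≤ p := perP_pos hτ hP
  have hne : ((Finset.range p).image fun t => (P.drop t).take p).Nonempty :=
    Finset.Nonempty.image (Finset.nonempty_range_iff.2 (by omega)) _
  rw [LrootP, untop'_min _ hne]
  have := Finset.min'_mem _ hne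
  rw [Finset.mem_image] at this
  obtain ⟨t, ht, e⟩ := this
  exact ⟨t, Finset.mem_range.mp ht, e⟩

lemma LrootP_length (hτ : 1 ≤ τ) (hP : Periodic τ P) :
    (LrootP τ P).length = perP τ P := by
  obtain ⟨t, ht, e⟩ := LrootP_mem hτ hP
  rw [← e, protP_length hτ hP ht]

lemma LheadP_spec (hτ : 1 ≤ τ) (hP : Periodic τ P) :
    LheadP τ P < perP τ P ∧ (P.drop (LheadP τ P)).take (perP τ P) = LrootP τ P := by
  obtain ⟨t, ht, e⟩ := LrootP_mem hτ hP
  have : LheadP τ P ∈ {s | s < perP τ P ∧ (P.drop s).take (perP τ P) = LrootP τ P} :=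
    Nat.sInf_mem ⟨t, ht, e⟩
  exact this

/-- periodicity of `P[1..3τ-1)` expressed on `P` itself -/
lemma P_take_per (hτ : 1 ≤ τ) (hP : Periodic τ P) :
    ∀ i, i + perP τ P < 3 * τ - 1 → P.getD i 0 = P.getD (i + perP τ P) 0 := by
  intro i hi
  have hp1 : 1 ≤ perP τ P := perP_pos hτ hP
  have hlen := Ptake_length hτ hP
  have hne : P.take (3 * τ - 1) ≠ [] := by
    intro hn; rw [hn] at hlen; simp at hlen; omega
  have hpe : per (P.take (3 * τ - 1)) = perP τ P := rfl
  have h := (per_isPeriod (P.take (3 * τ - 1)) hne).2.2 i (by rw [hlen, hpe]; exact hi)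
  rw [hpe] at h
  rw [getD_take _ _ _ (by omega), getD_take _ _ _ (by omega)] at h
  exact h

lemma pend_lcp_low (hτ : 1 ≤ τ) (hP : Periodic τ P) :
    3 * τ - 1 - perP τ P ≤ lcp P (P.drop (perP τ P)) := by
  obtain ⟨h1, h2⟩ := id hP
  have hp1 : 1 ≤ perP τ P := perP_pos hτ hP
  refine le_lcp P (P.drop (perP τ P)) (3 * τ - 1 - perP τ P) (by omega) (by simp; omega) ?_
  intro i hi
  rw [getD_drop]
  have := P_take_per hτ hP i (by omega)
  rwa [show i + perP τ P = perP τ P + i by omega] at this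

lemma pend_bounds (hτ : 1 ≤ τ) (hP : Periodic τ P) :
    3 * τ - 1 ≤ pend τ P - 1 ∧ pend τ P - 1 ≤ P.length ∧
      pend τ P - 1 = perP τ P + lcp P (P.drop (perP τ P)) := by
  obtain ⟨h1, h2⟩ := id hP
  have hp1 : 1 ≤ perP τ P := perP_pos hτ hP
  have hlow := pend_lcp_low hτ hP
  have hhigh : lcp P (P.drop (perP τ P)) ≤ P.length - perP τ P := by
    have := lcp_le_right P (P.drop (perP τ P))
    simpa using this
  unfold pend
  omega

lemma P_run_per (hτ : 1 ≤ τ) (hP : Periodic τ P) :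
    ∀ x, perP τ P ≤ x → x < pend τ P - 1 → P.getD x 0 = P.getD (x - perP τ P) 0 := by
  intro x hx1 hx2
  have hb := pend_bounds hτ hP
  have h := lcp_getD P (P.drop (perP τ P)) (x - perP τ P) (by omega)
  rw [getD_drop] at h
  rw [show perP τ P + (x - perP τ P) = x by omega] at h
  exact h.symm

lemma P_break (hτ : 1 ≤ τ) (hP : Periodic τ P) (hm : pend τ P ≤ P.length) :
    P.getD (pend τ P - 1) 0 ≠ P.getD (pend τ P - 1 - perP τ P) 0 := by
  have hb := pend_bounds hτ hP
  have hp1 : 1 ≤ perP τ P := perP_pos hτ hP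
  set l := lcp P (P.drop (perP τ P)) with hl
  have h := lcp_ne P (P.drop (perP τ P)) (by omega) (by simp; omega)
  rw [getD_drop] at h
  rw [show pend τ P - 1 = perP τ P + l by omega,
      show perP τ P + l - perP τ P = l by omega]
  exact fun e => h e.symm

end Roots

section Pattern
variable {T : List ℕ} {τ j : ℕ} {P : List ℕ}

lemma patT (hτ : 1 ≤ τ) (hj : j ∈ R T τ) :
    ∀ i, i < rend T τ j - j →
      T.getD (j - 1 + i) 0 =
        (Lroot T τ j).getD ((i + per (sub T j (j + 3 * τ - 1)) - Lhead T τ j) %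
          per (sub T j (j + 3 * τ - 1))) 0 := by
  obtain ⟨hj1, hj2, hj3⟩ := R_elim hj
  have hp1 := window_per_pos hτ hj
  have hrb := rend_bounds hτ hj
  have hs := Lhead_spec hτ hj
  set p := per (sub T j (j + 3 * τ - 1)) with hp
  set s := Lhead T τ j with hsd
  set H := Lroot T τ j with hH
  have hSlen : (sub T j (rend T τ j)).length = rend T τ j - j := by
    rw [sub_length]; omega
  have hSgetD : ∀ i, i < rend T τ j - j →
      (sub T j (rend T τ j)).getD i 0 = T.getD (j - 1 + i) 0 :=
    fun i hi => sub_getD T j (rend T τ j) i hi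
  have main := pattern_of_period (sub T j (rend T τ j)) H p s (by omega) hs.1
    (by omega) ?_ ?_
  · intro i hi
    rw [← hSgetD i hi]
    exact main i (by omega)
  · -- periodicity
    intro i hip
    rw [hSlen] at hip
    rw [hSgetD i (by omega), hSgetD (i + p) (by omega)]
    have h := run_per hτ hj (j + i + p) (by omega) (by omega)
    rw [← hp] at h
    rw [show j + i + p - 1 - p = j - 1 + i by omega,
        show j + i + p - 1 = j - 1 + (i + p) by omega] at h
    exact h.symm
  · -- head window
    intro k hk
    have e : (sub T (j + s) (j + s + p)).getD k 0 = H.getD k 0 := by rw [hs.2]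
    rw [sub_getD _ _ _ _ (by omega)] at e
    rw [hSgetD (s + k) (by omega)]
    rwa [show j + s - 1 + k = j - 1 + (s + k) by omega] at e

lemma patP (hτ : 1 ≤ τ) (hP : Periodic τ P) :
    ∀ i, i < pend τ P - 1 →
      P.getD i 0 =
        (LrootP τ P).getD ((i + perP τ P - LheadP τ P) % perP τ P) 0 := by
  obtain ⟨hm1, hm2⟩ := id hP
  have hp1 := perP_pos hτ hP
  have hpb := pend_bounds hτ hP
  have hs := LheadP_spec hτ hP
  set p := perP τ P with hp
  set s := LheadP τ P with hsd
  set H := LrootP τ P with hH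
  have hSlen : (P.take (pend τ P - 1)).length = pend τ P - 1 := by simp; omega
  have hSgetD : ∀ i, i < pend τ P - 1 →
      (P.take (pend τ P - 1)).getD i 0 = P.getD i 0 :=
    fun i hi => getD_take P _ i hi
  have main := pattern_of_period (P.take (pend τ P - 1)) H p s (by omega) hs.1
    (by omega) ?_ ?_
  · intro i hi
    rw [← hSgetD i hi]
    exact main i (by omega)
  · intro i hip
    rw [hSlen] at hip
    rw [hSgetD i (by omega), hSgetD (i + p) (by omega)]
    have h := P_run_per hτ hP (i + p) (by omega) (by omega)
    rw [show i + p - p = i by omega] at h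
    exact h.symm
  · intro k hk
    have e : ((P.drop s).take p).getD k 0 = H.getD k 0 := by rw [hs.2]
    rw [getD_take _ _ _ hk, getD_drop] at e
    rw [hSgetD (s + k) (by omega)]
    exact e

lemma window_per_eq (hτ : 1 ≤ τ) (hj : j ∈ R T τ) (hP : Periodic τ P)
    (hw : sub T j (j + 3 * τ - 1) = P.take (3 * τ - 1)) :
    per (sub T j (j + 3 * τ - 1)) = perP τ P := by rw [hw]; rfl

lemma rot_eq_of_window_eq (hτ : 1 ≤ τ) (hj : j ∈ R T τ) (hP : Periodic τ P)
    (hw : sub T j (j + 3 * τ - 1) = P.take (3 * τ - 1)) :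
    ∀ t, t < perP τ P → sub T (j + t) (j + t + perP τ P) = (P.drop t).take (perP τ P) := by
  intro t ht
  obtain ⟨hj1, hj2, hj3⟩ := R_elim hj
  have hpp := window_per_eq hτ hj hP hw
  have hp1 := perP_pos hτ hP
  obtain ⟨hm1, hm2⟩ := id hP
  apply list_eq_of_getD
  · rw [show (sub T (j + t) (j + t + perP τ P)).length = perP τ P from by
      rw [sub_length]; omega, protP_length hτ hP ht]
  · rw [show (sub T (j + t) (j + t + perP τ P)).length = perP τ P from by
      rw [sub_length]; omega]
    intro i hi
    rw [sub_getD _ _ _ _ (by omega), getD_take _ _ _ hi, getD_drop]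
    have e : (sub T j (j + 3 * τ - 1)).getD (t + i) 0 =
        (P.take (3 * τ - 1)).getD (t + i) 0 := by rw [hw]
    rw [sub_getD _ _ _ _ (by omega), getD_take _ _ _ (by omega)] at e
    rwa [show j + t - 1 + i = j - 1 + (t + i) by omega]

lemma roothead_eq_of_window_eq (hτ : 1 ≤ τ) (hj : j ∈ R T τ) (hP : Periodic τ P)
    (hw : sub T j (j + 3 * τ - 1) = P.take (3 * τ - 1)) :
    Lroot T τ j = LrootP τ P ∧ Lhead T τ j = LheadP τ P := by
  have hpp := window_per_eq hτ hj hP hw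
  have hrot := rot_eq_of_window_eq hτ hj hP hw
  have hroot : Lroot T τ j = LrootP τ P := by
    unfold Lroot LrootP
    rw [hpp]
    congr 2
    exact Finset.image_congr fun t ht => hrot t (by simpa using ht)
  refine ⟨hroot, ?_⟩
  unfold Lhead LheadP
  rw [hpp, hroot]
  congr 1
  ext s'
  simp only [Set.mem_setOf_eq]
  constructor
  · rintro ⟨h1, h2⟩; exact ⟨h1, by rw [← hrot s' h1]; exact h2⟩
  · rintro ⟨h1, h2⟩; exact ⟨h1, by rw [hrot s' h1]; exact h2⟩

end Pattern

section Central
variable {T : List ℕ} {τ j : ℕ} {P : List ℕ}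

lemma typ_eq_neg_iff : typ T τ j = -1 ↔
    ¬(rend T τ j ≤ T.length ∧
      idx T (rend T τ j - per (sub T j (j + 3 * τ - 1))) < idx T (rend T τ j)) := by
  unfold typ
  split
  · rename_i h; exact iff_of_false (by norm_num) (not_not_intro h)
  · rename_i h; exact iff_of_true rfl h

lemma typP_neg_iff : typP τ P = -1 ↔
    ¬(pend τ P ≤ P.length ∧ idx P (pend τ P - perP τ P) < idx P (pend τ P)) := by
  unfold typP
  split
  · rename_i h; exact iff_of_false (by norm_num) (not_not_intro h)
  · rename_i h; exact iff_of_true rfl h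

set_option maxHeartbeats 2000000 in
lemma central (hτ : 1 ≤ τ) (hP : Periodic τ P) (htypP : typP τ P = -1)
    (hj : j ∈ R T τ)
    (hroot : Lroot T τ j = LrootP τ P) (hhead : Lhead T τ j = LheadP τ P) :
    (3 * τ - 1 ≤ lcp (suf T j) P) ∧
    (Lexp T τ j < LexpP τ P → (suf T j < P ↔ typ T τ j = -1)) ∧
    (LexpP τ P < Lexp T τ j → ¬ suf T j < P) ∧
    (Lexp T τ j = LexpP τ P → typ T τ j = 1 → ¬ suf T j < P) := by
  obtain ⟨hj1, hj2, hj3⟩ := R_elim hj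
  obtain ⟨hm1, hm2⟩ := id hP
  have hpP1 : 1 ≤ perP τ P := perP_pos hτ hP
  have hpp : per (sub T j (j + 3 * τ - 1)) = perP τ P := by
    rw [← Lroot_length hτ hj, hroot, LrootP_length hτ hP]
  have hsP : LheadP τ P < perP τ P := (LheadP_spec hτ hP).1
  have hrb := rend_bounds hτ hj
  have hpb := pend_bounds hτ hP
  have hsuflen : (suf T j).length = T.length + 1 - j := by rw [suf_length]; omega
  -- pattern facts
  have pT : ∀ i, i < rend T τ j - j → T.getD (j - 1 + i) 0 =
      (LrootP τ P).getD ((i + perP τ P - LheadP τ P) % perP τ P) 0 := by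
    intro i hi
    have := patT hτ hj i hi
    rwa [hpp, hhead, hroot] at this
  have pP : ∀ i, i < pend τ P - 1 → P.getD i 0 =
      (LrootP τ P).getD ((i + perP τ P - LheadP τ P) % perP τ P) 0 := patP hτ hP
  have agree : ∀ i, i < rend T τ j - j → i < pend τ P - 1 →
      (suf T j).getD i 0 = P.getD i 0 := by
    intro i h1 h2
    rw [suf_getD, pT i h1, ← pP i h2]
  -- the two "period continuation" characters
  have hTcont : rend T τ j ≤ T.length → T.getD (rend T τ j - 1 - perP τ P) 0 =
      (LrootP τ P).getD ((rend T τ j - j + perP τ P - LheadP τ P) % perP τ P) 0 := by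
    intro _
    have h := pT (rend T τ j - j - perP τ P) (by omega)
    rw [show j - 1 + (rend T τ j - j - perP τ P) = rend T τ j - 1 - perP τ P by omega] at h
    rw [h]
    congr 1
    rw [show rend T τ j - j + perP τ P - LheadP τ P =
        (rend T τ j - j - perP τ P + perP τ P - LheadP τ P) + perP τ P by omega,
      Nat.add_mod_right]
  have hPcont : pend τ P ≤ P.length → P.getD (pend τ P - 1 - perP τ P) 0 =
      (LrootP τ P).getD ((pend τ P - 1 + perP τ P - LheadP τ P) % perP τ P) 0 := by
    intro _
    have h := pP (pend τ P - 1 - perP τ P) (by omega)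
    rw [h]
    congr 1
    rw [show pend τ P - 1 + perP τ P - LheadP τ P =
        (pend τ P - 1 - perP τ P + perP τ P - LheadP τ P) + perP τ P by omega,
      Nat.add_mod_right]
  -- case A: T's run ends strictly first
  have caseTP : rend T τ j - j < pend τ P - 1 → (suf T j < P ↔ typ T τ j = -1) := by
    intro hlt
    rcases Nat.lt_or_ge T.length (rend T τ j) with hrn | hrn
    · -- rend = n + 1 : suf is a strict prefix of P
      have h1 : suf T j < P := by
        apply lex_of_prefix
        · intro i hi
          exact agree i (by omega) (by omega)
        · omega
      have h2 : typ T τ j = -1 := by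
        rw [typ_eq_neg_iff]; rintro ⟨hle, _⟩; omega
      exact iff_of_true h1 h2
    · -- rend ≤ n : first difference at position rend - j
      have hX : (suf T j).getD (rend T τ j - j) 0 = T.getD (rend T τ j - 1) 0 := by
        rw [suf_getD]; congr 1; omega
      have hY : P.getD (rend T τ j - j) 0 = T.getD (rend T τ j - 1 - perP τ P) 0 := by
        rw [pP _ hlt, hTcont hrn]
      have hne : T.getD (rend T τ j - 1) 0 ≠ T.getD (rend T τ j - 1 - perP τ P) 0 := by
        have := run_break hτ hj hrn
        rwa [hpp] at this
      have hidx1 : idx T (rend T τ j) = T.getD (rend T τ j - 1) 0 := rfl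
      have hidx2 : idx T (rend T τ j - per (sub T j (j + 3 * τ - 1))) =
          T.getD (rend T τ j - 1 - perP τ P) 0 := by
        unfold idx; rw [hpp]; congr 1; omega
      constructor
      · intro hlex
        rw [typ_eq_neg_iff]
        rintro ⟨_, hidxlt⟩
        rw [hidx1, hidx2] at hidxlt
        have : P < suf T j := by
          apply lex_of_getD_lt P (suf T j) (rend T τ j - j)
          · intro i hi; exact (agree i hi (by omega)).symm
          · omega
          · omega
          · rw [hX, hY]; exact hidxlt
        exact absurd hlex (lt_asymm this)
      · intro htm
        rw [typ_eq_neg_iff] at htm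
        have hle : T.getD (rend T τ j - 1) 0 ≤ T.getD (rend T τ j - 1 - perP τ P) 0 := by
          by_contra hcon
          exact htm ⟨hrn, by rw [hidx1, hidx2]; omega⟩
        apply lex_of_getD_lt (suf T j) P (rend T τ j - j)
        · intro i hi; exact agree i hi (by omega)
        · omega
        · omega
        · rw [hX, hY]; omega
  -- case B: P's run ends strictly first ⇒ P < suf (or P = prefix) ⇒ ¬ suf < P
  have casePT : pend τ P - 1 < rend T τ j - j → ¬ suf T j < P := by
    intro hlt
    rcases Nat.lt_or_ge P.length (pend τ P) with hpn | hpn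
    · -- pend = m + 1 : P is a strict prefix of suf
      have h1 : P < suf T j := by
        apply lex_of_prefix
        · intro i hi; exact (agree i (by omega) (by omega)).symm
        · omega
      exact lt_asymm h1
    · -- pend ≤ m : P's break char is smaller
      have hYX : P.getD (pend τ P - 1) 0 < P.getD (pend τ P - 1 - perP τ P) 0 := by
        have hne := P_break hτ hP hpn
        have htm := typP_neg_iff.mp htypP
        have hidx1 : idx P (pend τ P) = P.getD (pend τ P - 1) 0 := rfl
        have hidx2 : idx P (pend τ P - perP τ P) = P.getD (pend τ P - 1 - perP τ P) 0 := by
          unfold idx; congr 1; omega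
        by_contra hcon
        exact htm ⟨hpn, by rw [hidx1, hidx2]; omega⟩
      have hX : (suf T j).getD (pend τ P - 1) 0 = P.getD (pend τ P - 1 - perP τ P) 0 := by
        rw [suf_getD]
        have h := pT (pend τ P - 1) (by omega)
        rw [h, hPcont hpn]
      have : P < suf T j := by
        apply lex_of_getD_lt P (suf T j) (pend τ P - 1)
        · intro i hi; exact (agree i (by omega) hi).symm
        · omega
        · omega
        · rw [hX]; exact hYX
      exact lt_asymm this
  -- case C: runs end together, type +1 ⇒ ¬ suf < P
  have caseEQ : rend T τ j - j = pend τ P - 1 → typ T τ j = 1 → ¬ suf T j < P := by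
    intro heq ht1
    have hcond : rend T τ j ≤ T.length ∧
        idx T (rend T τ j - per (sub T j (j + 3 * τ - 1))) < idx T (rend T τ j) := by
      by_contra hcon
      rw [← typ_eq_neg_iff] at hcon
      rw [ht1] at hcon; norm_num at hcon
    obtain ⟨hrn, hidxlt⟩ := hcond
    have hidx2 : idx T (rend T τ j - per (sub T j (j + 3 * τ - 1))) =
        T.getD (rend T τ j - 1 - perP τ P) 0 := by
      unfold idx; rw [hpp]; congr 1; omega
    have hidx1 : idx T (rend T τ j) = T.getD (rend T τ j - 1) 0 := rfl
    rw [hidx1, hidx2] at hidxlt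
    rcases Nat.lt_or_ge P.length (pend τ P) with hpn | hpn
    · -- pend = m + 1 : P strict prefix of suf
      have h1 : P < suf T j := by
        apply lex_of_prefix
        · intro i hi; exact (agree i (by omega) (by omega)).symm
        · omega
      exact lt_asymm h1
    · -- both break; P char < continuation < T char
      have hYX : P.getD (pend τ P - 1) 0 < P.getD (pend τ P - 1 - perP τ P) 0 := by
        have hne := P_break hτ hP hpn
        have htm := typP_neg_iff.mp htypP
        have hidx1' : idx P (pend τ P) = P.getD (pend τ P - 1) 0 := rfl
        have hidx2' : idx P (pend τ P - perP τ P) = P.getD (pend τ P - 1 - perP τ P) 0 := by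
          unfold idx; congr 1; omega
        by_contra hcon
        exact htm ⟨hpn, by rw [hidx1', hidx2']; omega⟩
      have hcc : P.getD (pend τ P - 1 - perP τ P) 0 = T.getD (rend T τ j - 1 - perP τ P) 0 := by
        rw [hPcont hpn, hTcont hrn, heq]
      have hX : (suf T j).getD (pend τ P - 1) 0 = T.getD (rend T τ j - 1) 0 := by
        rw [suf_getD]; congr 1; omega
      have : P < suf T j := by
        apply lex_of_getD_lt P (suf T j) (pend τ P - 1)
        · intro i hi; exact (agree i (by omega) hi).symm
        · omega
        · omega
        · rw [hX]; omega
      exact lt_asymm this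
  -- exponent arithmetic
  have hLT : Lexp T τ j = (rend T τ j - j - LheadP τ P) / perP τ P := by
    unfold Lexp; rw [hpp, hhead]
  have hLP : LexpP τ P = (pend τ P - 1 - LheadP τ P) / perP τ P := rfl
  refine ⟨?_, ?_, ?_, ?_⟩
  · -- lcp lower bound
    apply le_lcp
    · omega
    · omega
    · intro i hi; exact agree i (by omega) (by omega)
  · intro hlt
    refine caseTP ?_
    rw [hLT, hLP] at hlt
    by_contra hcon
    have := Nat.div_le_div_right (c := perP τ P)
      (show pend τ P - 1 - LheadP τ P ≤ rend T τ j - j - LheadP τ P by omega)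
    omega
  · intro hlt
    refine casePT ?_
    rw [hLT, hLP] at hlt
    by_contra hcon
    have := Nat.div_le_div_right (c := perP τ P)
      (show rend T τ j - j - LheadP τ P ≤ pend τ P - 1 - LheadP τ P by omega)
    omega
  · intro heq ht1
    rcases lt_trichotomy (rend T τ j - j) (pend τ P - 1) with h | h | h
    · intro hlex
      have := (caseTP h).mp hlex
      rw [ht1] at this; norm_num at this
    · exact caseEQ h ht1
    · exact casePT h

end Central

section Final
variable {T : List ℕ} {τ j : ℕ} {P : List ℕ}

lemma typ_trichot (T : List ℕ) (τ j : ℕ) : typ T τ j = 1 ∨ typ T τ j = -1 := by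
  unfold typ; split
  · exact Or.inl rfl
  · exact Or.inr rfl

lemma window_from_lcp (hτ : 1 ≤ τ) (hP : Periodic τ P)
    (h1 : 1 ≤ j) (hl : 3 * τ - 1 ≤ lcp (suf T j) P) :
    sub T j (j + 3 * τ - 1) = P.take (3 * τ - 1) ∧ j ∈ R T τ := by
  obtain ⟨hm1, hm2⟩ := id hP
  have hsl : 3 * τ - 1 ≤ (suf T j).length := le_trans hl (lcp_le_left _ _)
  rw [suf_length] at hsl
  have hbound : j + 3 * τ ≤ T.length + 2 := by omega
  have hw : sub T j (j + 3 * τ - 1) = P.take (3 * τ - 1) := by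
    apply list_eq_of_getD
    · rw [sub_length]; simp; omega
    · rw [show (sub T j (j + 3 * τ - 1)).length = 3 * τ - 1 from by rw [sub_length]; omega]
      intro i hi
      rw [sub_getD _ _ _ _ (by omega), getD_take _ _ _ hi]
      have := lcp_getD (suf T j) P i (by omega)
      rwa [suf_getD] at this
  refine ⟨hw, h1, hbound, ?_⟩
  rw [hw]
  exact hm2

lemma mem_RminusSH {s : ℕ} {H : List ℕ} :
    j ∈ RminusSH T τ s H ↔
      j ∈ R T τ ∧ typ T τ j = -1 ∧ Lroot T τ j = H ∧ Lhead T τ j = s := by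
  simp only [RminusSH, Rminus, RsH, Set.mem_inter_iff, Set.mem_setOf_eq]
  tauto

/-- the key set identity -/
lemma key_iff (n : ℕ) (hτ : 1 ≤ τ) (hlen : T.length = n)
    (hP : Periodic τ P) (htypP : typP τ P = -1) (j : ℕ) :
    (1 ≤ j ∧ j ≤ n ∧ 3 * τ - 1 ≤ lcp (suf T j) P ∧ suf T j < P) ↔
      ((j ∈ RminusSH T τ (LheadP τ P) (LrootP τ P) ∧ Lexp T τ j ≤ LexpP τ P) ∧
        ¬(j ∈ RminusSH T τ (LheadP τ P) (LrootP τ P) ∧ Lexp T τ j = LexpP τ P ∧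
          P ≤ suf T j)) := by
  have hpP1 : 1 ≤ perP τ P := perP_pos hτ hP
  obtain ⟨hm1, hm2⟩ := id hP
  constructor
  · rintro ⟨h1j, hjn, hl, hlex⟩
    obtain ⟨hw, hjR⟩ := window_from_lcp hτ hP h1j hl
    obtain ⟨hroot, hhead⟩ := roothead_eq_of_window_eq hτ hjR hP hw
    obtain ⟨hc1, hc2, hc3, hc4⟩ := central hτ hP htypP hjR hroot hhead
    have htm : typ T τ j = -1 := by
      rcases typ_trichot T τ j with h1 | h1
      · exfalso
        rcases lt_trichotomy (Lexp T τ j) (LexpP τ P) with h | h | h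
        · have := (hc2 h).mp hlex; rw [h1] at this; norm_num at this
        · exact hc4 h h1 hlex
        · exact hc3 h hlex
      · exact h1
    have hle : Lexp T τ j ≤ LexpP τ P := by
      by_contra hcon
      exact hc3 (by omega) hlex
    refine ⟨⟨mem_RminusSH.mpr ⟨hjR, htm, hroot, hhead⟩, hle⟩, ?_⟩
    rintro ⟨-, -, hPle⟩
    exact absurd hPle (not_le.mpr hlex)
  · rintro ⟨⟨hmem, hle⟩, hnot⟩
    obtain ⟨hjR, htm, hroot, hhead⟩ := mem_RminusSH.mp hmem
    obtain ⟨hc1, hc2, hc3, hc4⟩ := central hτ hP htypP hjR hroot hhead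
    obtain ⟨g1, g2, g3⟩ := R_elim hjR
    refine ⟨g1, by omega, hc1, ?_⟩
    rcases Nat.lt_or_ge (Lexp T τ j) (LexpP τ P) with h | h
    · exact (hc2 h).mpr htm
    · have heq : Lexp T τ j = LexpP τ P := by omega
      by_contra hcon
      exact hnot ⟨hmem, heq, not_lt.mp hcon⟩

end Final

/-- Lemma: `δ(P,T) = δᵃ(P,T) − δˢ(P,T)` for periodic `P` of type `−1`. -/
theorem statement_16
    (σ n τ : ℕ) (T : List ℕ)
    (hσ : 2 ≤ σ) (hn : 2 ≤ n) (hτ : 1 ≤ τ)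
    (hlen : T.length = n) (halph : ∀ c ∈ T, c < σ)
    (hlast : idx T n = 0) (huniq : ∀ i, 1 ≤ i → i < n → idx T i ≠ 0)
    (P : List ℕ) (m : ℕ) (hm : P.length = m) (halphP : ∀ c ∈ P, c < σ)
    (hperiodic : Periodic τ P) (htypP : typP τ P = -1)
    (s : ℕ) (hs : s = LheadP τ P) (H : List ℕ) (hH : H = LrootP τ P)
    (δ δa δs : ℕ)
    (hδ : δ = Set.ncard {j | 1 ≤ j ∧ j ≤ n ∧ 3 * τ - 1 ≤ lcp (suf T j) P ∧
      suf T j < P})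
    (hδa : δa = Set.ncard {j | j ∈ RminusSH T τ s H ∧ Lexp T τ j ≤ LexpP τ P})
    (hδs : δs = Set.ncard {j | j ∈ RminusSH T τ s H ∧ Lexp T τ j = LexpP τ P ∧
      P ≤ suf T j}) :
    (δ : ℤ) = (δa : ℤ) - (δs : ℤ) := by
  subst hs hH hδ hδa hδs hm
  set Sa : Set ℕ := {j | j ∈ RminusSH T τ (LheadP τ P) (LrootP τ P) ∧
      Lexp T τ j ≤ LexpP τ P} with hSa
  set Ss : Set ℕ := {j | j ∈ RminusSH T τ (LheadP τ P) (LrootP τ P) ∧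
      Lexp T τ j = LexpP τ P ∧ P ≤ suf T j} with hSs
  set A : Set ℕ := {j | 1 ≤ j ∧ j ≤ n ∧ 3 * τ - 1 ≤ lcp (suf T j) P ∧ suf T j < P}
    with hA
  have hSa_fin : Sa.Finite := by
    apply (Set.finite_Icc 1 n).subset
    rintro j ⟨hmem, -⟩
    obtain ⟨hjR, -, -, -⟩ := mem_RminusSH.mp hmem
    obtain ⟨g1, g2, g3⟩ := R_elim hjR
    exact ⟨g1, by omega⟩
  have hSs_sub : Ss ⊆ Sa := by
    rintro j ⟨h1, h2, -⟩
    exact ⟨h1, le_of_eq h2⟩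
  have hdiff : Sa \ Ss = A := by
    ext j
    simp only [hSa, hSs, hA, Set.mem_diff, Set.mem_setOf_eq]
    rw [key_iff n hτ hlen hperiodic htypP j]
  have hcount := Set.ncard_diff_add_ncard_of_subset hSs_sub hSa_fin
  rw [hdiff] at hcount
  omega
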